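/- Let L be the generator of an irreducible continuous-time Markov chain on a finite state space with invariant probability measure π, and let L_S be its symmetric part with respect to L²(π). Let α_min and α_max be the smallest and largest nonzero eigenvalues of −L_S (which are real and positive). Then every nonzero eigenvalue λ of −L satisfies α_min ≤ Re(λ) ≤ α_max. -/

import Mathlib

open Finset


lemma aux_row_eq {Ω : Type*} [Fintype Ω] [DecidableEq Ω]
    (c : Ω → Ω → ℝ) (π : Ω → ℝ) (hπpos : ∀ x, 0 < π x)
    (hinv : ∀ f : Ω → ℝ, ∑ x, π x * (∑ y, c x y * (f y - f x)) = 0)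
    (cs : Ω → Ω → ℝ)
    (hcs : ∀ x y, cs x y = (c x y + π y * c y x / π x) / 2) :
    ∀ x, ∑ y, cs x y = ∑ y, c x y := by
  have hdelta : ∀ z, ∑ y, π y * c y z = π z * ∑ y, c z y := by
    intro z
    have h := hinv (fun w => if w = z then (1:ℝ) else 0)
    simp only [mul_sub, Finset.sum_sub_distrib, mul_ite, mul_one, mul_zero,
      Finset.sum_ite_eq', Finset.mem_univ, if_true, Finset.mul_sum] at h
    have h3 : ∑ x, ∑ y, (if x = z then π x * c x y else 0) = π z * ∑ y, c z y := by
      rw [Finset.sum_eq_single z]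
      · simp [Finset.mul_sum]
      · intro b _ hb; simp [hb]
      · intro hz; exact absurd (Finset.mem_univ z) hz
    rw [h3] at h
    linarith
  intro x
  have h1 : ∑ y, cs x y = ((∑ y, c x y) + (∑ y, π y * c y x) / π x) / 2 := by
    rw [Finset.sum_congr rfl (fun y _ => hcs x y), ← Finset.sum_div,
      Finset.sum_add_distrib, Finset.sum_div]
  rw [h1, hdelta x, mul_div_cancel_left₀ _ (hπpos x).ne']
  ring

lemma aux_quad_eq {Ω : Type*} [Fintype Ω] [DecidableEq Ω]
    (c : Ω → Ω → ℝ) (π : Ω → ℝ) (hπpos : ∀ x, 0 < π x)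
    (cs : Ω → Ω → ℝ)
    (hcs : ∀ x y, cs x y = (c x y + π y * c y x / π x) / 2)
    (hrow : ∀ x, ∑ y, cs x y = ∑ y, c x y) (u : Ω → ℝ) :
    ∑ x, π x * u x * -(∑ y, c x y * (u y - u x))
      = ∑ x, π x * u x * -(∑ y, cs x y * (u y - u x)) := by
  have hπcs : ∀ x y, π x * cs x y = (π x * c x y + π y * c y x) / 2 := by
    intro x y; rw [hcs]; field_simp [(hπpos x).ne']
  have expand : ∀ r : Ω → Ω → ℝ, ∀ x, π x * u x * -(∑ y, r x y * (u y - u x))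
      = (π x * (u x * u x)) * (∑ y, r x y) - ∑ y, π x * r x y * (u x * u y) := by
    intro r x
    rw [Finset.mul_sum, ← Finset.sum_sub_distrib, ← Finset.sum_neg_distrib,
      Finset.mul_sum]
    apply Finset.sum_congr rfl; intro y _; ring
  rw [Finset.sum_congr rfl (fun x _ => expand c x),
    Finset.sum_congr rfl (fun x _ => expand cs x),
    Finset.sum_sub_distrib, Finset.sum_sub_distrib]
  have e1 : ∑ x, π x * (u x * u x) * (∑ y, cs x y) = ∑ x, π x * (u x * u x) * (∑ y, c x y) :=
    Finset.sum_congr rfl (fun x _ => by rw [hrow x])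
  have swap2 : ∑ x, ∑ y, π y * c y x * (u x * u y) = ∑ x, ∑ y, π x * c x y * (u x * u y) := by
    rw [Finset.sum_comm]
    exact Finset.sum_congr rfl fun a _ => Finset.sum_congr rfl fun b _ => by ring
  have e2 : ∑ x, ∑ y, π x * cs x y * (u x * u y) = ∑ x, ∑ y, π x * c x y * (u x * u y) := by
    have p1 : ∑ x, ∑ y, π x * cs x y * (u x * u y)
        = ∑ x, ∑ y, ((π x * c x y * (u x * u y)) + (π y * c y x * (u x * u y))) / 2 := by
      apply Finset.sum_congr rfl; intro x _; apply Finset.sum_congr rfl; intro y _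
      rw [show π x * cs x y * (u x * u y) = (π x * cs x y) * (u x * u y) from by ring,
        hπcs x y]
      ring
    rw [p1]
    simp only [← Finset.sum_div, Finset.sum_add_distrib]
    rw [swap2]
    ring
  rw [e1, e2]

lemma aux_kernel_const {Ω : Type*} [Fintype Ω] [DecidableEq Ω]
    (c : Ω → Ω → ℝ) (π : Ω → ℝ)
    (hc : ∀ x y, x ≠ y → 0 ≤ c x y) (hπpos : ∀ x, 0 < π x)
    (hirr : ∀ x y : Ω, x ≠ y → ∃ (k : ℕ) (p : Fin (k + 1) → Ω),
      p 0 = x ∧ p (Fin.last k) = y ∧ ∀ i : Fin k, 0 < c (p i.castSucc) (p i.succ))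
    (cs : Ω → Ω → ℝ)
    (hcs : ∀ x y, cs x y = (c x y + π y * c y x / π x) / 2)
    (hsymm : ∀ x y, π x * cs x y = π y * cs y x)
    (h : Ω → ℝ) (hh : ∀ x, ∑ y, cs x y * (h y - h x) = 0) :
    ∀ x y, h x = h y := by
  have hcs_nonneg : ∀ x y, x ≠ y → 0 ≤ cs x y := by
    intro x y hxy
    rw [hcs]
    have h1 := hc x y hxy
    have h2 := hc y x (Ne.symm hxy)
    have h3 := (hπpos y).le
    have h4 := hπpos x
    positivity
  -- each x: ∑_y π x * cs x y * (h x * h y) = ∑_y π x * cs x y * (h x)^2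
  have hx0 : ∀ x, ∑ y, π x * cs x y * (h x * h y) = ∑ y, π x * cs x y * (h x * h x) := by
    intro x
    have h2 : ∑ y, (π x * h x) * (cs x y * (h y - h x)) = 0 := by
      rw [← Finset.mul_sum, hh x, mul_zero]
    have h4 : ∑ y, (π x * cs x y * (h x * h y) - π x * cs x y * (h x * h x))
        = ∑ y, (π x * h x) * (cs x y * (h y - h x)) :=
      Finset.sum_congr rfl fun y _ => by ring
    rw [Finset.sum_sub_distrib] at h4
    rw [h2] at h4
    linarith
  have hswap : ∑ x, ∑ y, π x * cs x y * (h y * h y) = ∑ x, ∑ y, π x * cs x y * (h x * h x) := by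
    rw [Finset.sum_comm]
    apply Finset.sum_congr rfl; intro a _; apply Finset.sum_congr rfl; intro b _
    rw [show π b * cs b a * (h a * h a) = (π b * cs b a) * (h a * h a) from by ring, hsymm b a]
  have hE : ∑ x, ∑ y, π x * cs x y * ((h x - h y) * (h x - h y)) = 0 := by
    have p1 : ∑ x, ∑ y, π x * cs x y * ((h x - h y) * (h x - h y))
        = ∑ x, ∑ y, (π x * cs x y * (h x * h x) - 2 * (π x * cs x y * (h x * h y))
            + π x * cs x y * (h y * h y)) :=
      Finset.sum_congr rfl fun x _ => Finset.sum_congr rfl fun y _ => by ring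
    rw [p1]
    simp only [Finset.sum_add_distrib, Finset.sum_sub_distrib, ← Finset.mul_sum]
    rw [hswap, Finset.sum_congr rfl (fun x _ => hx0 x)]
    ring
  have hterm : ∀ x y, π x * cs x y * ((h x - h y) * (h x - h y)) = 0 := by
    have hnn : ∀ x y, 0 ≤ π x * cs x y * ((h x - h y) * (h x - h y)) := by
      intro x y
      by_cases hxy : x = y
      · subst hxy; simp
      · exact mul_nonneg (mul_nonneg (hπpos x).le (hcs_nonneg x y hxy)) (mul_self_nonneg _)
    have houter : ∀ x ∈ Finset.univ, (0:ℝ) ≤ ∑ y, π x * cs x y * ((h x - h y) * (h x - h y)) :=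
      fun x _ => Finset.sum_nonneg fun y _ => hnn x y
    intro x y
    have hx := (Finset.sum_eq_zero_iff_of_nonneg houter).mp hE x (Finset.mem_univ x)
    exact (Finset.sum_eq_zero_iff_of_nonneg (fun y _ => hnn x y)).mp hx y (Finset.mem_univ y)
  have hstep : ∀ x y, 0 < c x y → h x = h y := by
    intro x y hcxy
    by_cases hxy : x = y
    · rw [hxy]
    · have hcspos : 0 < cs x y := by
        rw [hcs]
        have h2 := hc y x (Ne.symm hxy)
        have h3 := (hπpos y).le
        have h4 := hπpos x
        have h5 : 0 ≤ π y * c y x / π x := div_nonneg (mul_nonneg h3 h2) h4.le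
        linarith
      have := hterm x y
      have hne : π x * cs x y ≠ 0 := (mul_pos (hπpos x) hcspos).ne'
      have : (h x - h y) * (h x - h y) = 0 := by
        rcases mul_eq_zero.mp this with h' | h'
        · exact absurd h' hne
        · exact h'
      have := mul_self_eq_zero.mp this
      linarith
  intro x y
  by_cases hxy : x = y
  · rw [hxy]
  · obtain ⟨k, p, hp0, hpl, hps⟩ := hirr x y hxy
    have : ∀ i : Fin (k + 1), h (p i) = h (p 0) := by
      intro i
      induction i using Fin.induction with
      | zero => rfl
      | succ j ih =>
        rw [← ih]
        exact (hstep _ _ (hps j)).symm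
    have := this (Fin.last k)
    rw [hp0, hpl] at this
    exact this.symm

lemma aux_spectral {Ω : Type*} [Fintype Ω] [DecidableEq Ω] [Nonempty Ω]
    (cs : Ω → Ω → ℝ) (π : Ω → ℝ) (hπpos : ∀ x, 0 < π x)
    (hsymm : ∀ x y, π x * cs x y = π y * cs y x)
    (hker : ∀ h : Ω → ℝ, (∀ x, ∑ y, cs x y * (h y - h x) = 0) → ∀ x y, h x = h y)
    (αmin αmax : ℝ)
    (hbounds : ∀ β : ℝ, β ≠ 0 →
      (∃ h : Ω → ℝ, h ≠ 0 ∧ ∀ x, -(∑ y, cs x y * (h y - h x)) = β * h x) →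
      αmin ≤ β ∧ β ≤ αmax)
    (u : Ω → ℝ) (hu : ∑ x, π x * u x = 0) :
    αmin * (∑ x, π x * (u x * u x)) ≤ ∑ x, π x * u x * -(∑ y, cs x y * (u y - u x)) ∧
      ∑ x, π x * u x * -(∑ y, cs x y * (u y - u x)) ≤ αmax * (∑ x, π x * (u x * u x)) := by
  classical
  set s : Ω → ℝ := fun x => Real.sqrt (π x) with hs_def
  have hs_pos : ∀ x, 0 < s x := fun x => Real.sqrt_pos.mpr (hπpos x)
  have hs2 : ∀ x, s x * s x = π x := fun x => Real.mul_self_sqrt (hπpos x).le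
  set A : Matrix Ω Ω ℝ :=
    Matrix.of (fun x y => (if x = y then ∑ z, cs x z else 0) - s x * cs x y / s y) with hA_def
  have hAxy : ∀ x y, A x y = (if x = y then ∑ z, cs x z else 0) - s x * cs x y / s y :=
    fun x y => rfl
  -- key computation
  have key : ∀ (h : Ω → ℝ) (x : Ω),
      (A.mulVec (fun y => s y * h y)) x = s x * -(∑ y, cs x y * (h y - h x)) := by
    intro h x
    have e1 : (A.mulVec (fun y => s y * h y)) x
        = ∑ y, ((if x = y then ∑ z, cs x z else 0) - s x * cs x y / s y) * (s y * h y) := rfl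
    rw [e1]
    have e2 : ∀ y, ((if x = y then ∑ z, cs x z else 0) - s x * cs x y / s y) * (s y * h y)
        = (if x = y then (∑ z, cs x z) * (s y * h y) else 0) - s x * (cs x y * h y) := by
      intro y
      have : s x * cs x y / s y * (s y * h y) = s x * (cs x y * h y) := by
        field_simp [(hs_pos y).ne']
      rw [sub_mul, this]
      by_cases hxy : x = y <;> simp [hxy]
    rw [Finset.sum_congr rfl (fun y _ => e2 y), Finset.sum_sub_distrib,
      Finset.sum_ite_eq, if_pos (Finset.mem_univ x), ← Finset.mul_sum]
    have e3 : ∑ y, cs x y * (h y - h x) = (∑ y, cs x y * h y) - (∑ y, cs x y) * h x := by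
      rw [Finset.sum_mul, ← Finset.sum_sub_distrib]
      exact Finset.sum_congr rfl fun y _ => by ring
    rw [e3]
    ring
  have hA : A.IsHermitian := by
    rw [Matrix.IsHermitian]
    ext x y
    simp only [Matrix.conjTranspose_apply, star_trivial, hAxy]
    by_cases hxy : x = y
    · subst hxy; rfl
    · simp only [hxy, Ne.symm hxy, if_false]
      have : s y * cs y x / s x = s x * cs x y / s y := by
        rw [div_eq_div_iff (hs_pos x).ne' (hs_pos y).ne']
        linear_combination cs y x * hs2 y - cs x y * hs2 x + hsymm y x
      rw [this]
  have hTsym := Matrix.isHermitian_iff_isSymmetric.mp hA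
  set T := Matrix.toEuclideanLin A with hT_def
  have hn : Module.finrank ℝ (EuclideanSpace ℝ Ω) = Fintype.card Ω := finrank_euclideanSpace
  set b := hTsym.eigenvectorBasis hn with hb_def
  set μ := hTsym.eigenvalues hn with hμ_def
  have hb : ∀ i, T (b i) = μ i • b i := fun i => hTsym.apply_eigenvectorBasis hn i
  have happ : ∀ (v : EuclideanSpace ℝ Ω) (x : Ω), (T v) x = A.mulVec (fun y => v y) x :=
    fun v x => rfl
  have hinner : ∀ (a b : EuclideanSpace ℝ Ω),
      (inner ℝ a b : ℝ) = ∑ x, a x * b x := by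
    intro a b
    simp [PiLp.inner_apply, RCLike.inner_apply, conj_trivial, mul_comm]
  set w : EuclideanSpace ℝ Ω := (WithLp.equiv 2 (Ω → ℝ)).symm (fun x => s x * u x) with hw_def
  have hwx : ∀ x, w x = s x * u x := fun x => rfl
  set co : Fin (Fintype.card Ω) → ℝ := fun i => (inner ℝ (b i) w : ℝ) with hco_def
  -- coordinates along kernel eigenvectors vanish
  have hker_co : ∀ i, μ i = 0 → co i = 0 := by
    intro i hi
    set h : Ω → ℝ := fun x => b i x / s x with hh_def
    have hbh : ∀ y, b i y = s y * h y := by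
      intro y
      rw [hh_def]
      field_simp [(hs_pos y).ne']
    have hfun : (fun y => (b i) y) = fun y => s y * h y := funext hbh
    have hz : ∀ x, ∑ y, cs x y * (h y - h x) = 0 := by
      intro x
      have := congrFun (congrArg (fun (v : EuclideanSpace ℝ Ω) => (v : Ω → ℝ)) (hb i)) x
      have e : (T (b i)) x = s x * -(∑ y, cs x y * (h y - h x)) := by
        rw [happ (b i) x, hfun, key h x]
      have e2 : (μ i • b i : EuclideanSpace ℝ Ω) x = 0 := by
        simp [hi]
      have e3 : s x * -(∑ y, cs x y * (h y - h x)) = 0 := by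
        rw [← e]
        rw [hb i]
        exact e2
      have := mul_eq_zero.mp e3
      rcases this with h' | h'
      · exact absurd h' (hs_pos x).ne'
      · linarith [neg_eq_zero.mp h']
    have hconst := hker h hz
    obtain x₀ := Classical.arbitrary Ω
    have : co i = h x₀ * ∑ x, π x * u x := by
      rw [hco_def]
      simp only [hinner]
      rw [Finset.mul_sum]
      apply Finset.sum_congr rfl
      intro x _
      rw [hwx, hbh x, hconst x x₀, ← hs2 x]
      ring
    rw [this, hu, mul_zero]
  -- nonzero eigenvalues are bounded
  have hbound_i : ∀ i, μ i ≠ 0 → αmin ≤ μ i ∧ μ i ≤ αmax := by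
    intro i hi
    set h : Ω → ℝ := fun x => b i x / s x with hh_def
    have hbh : ∀ y, b i y = s y * h y := by
      intro y
      rw [hh_def]
      field_simp [(hs_pos y).ne']
    have hfun : (fun y => (b i) y) = fun y => s y * h y := funext hbh
    apply hbounds (μ i) hi
    refine ⟨h, ?_, ?_⟩
    · intro hzero
      have : b i = 0 := by
        apply PiLp.ext
        intro x
        rw [hbh x, show h x = 0 from congrFun hzero x, mul_zero]
        rfl
      exact b.orthonormal.ne_zero i this
    · intro x
      have e : (T (b i)) x = s x * -(∑ y, cs x y * (h y - h x)) := by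
        rw [happ (b i) x, hfun, key h x]
      have e2 : (T (b i)) x = μ i * (s x * h x) := by
        rw [hb i]
        have : (μ i • b i : EuclideanSpace ℝ Ω) x = μ i * b i x := rfl
        rw [this, hbh x]
      have e3 : s x * -(∑ y, cs x y * (h y - h x)) = μ i * (s x * h x) := by
        rw [← e, e2]
      apply mul_left_cancel₀ (hs_pos x).ne'
      linear_combination e3
  -- Parseval
  have hN : ∑ i, co i * co i = ∑ x, π x * (u x * u x) := by
    have hp := b.sum_inner_mul_inner w w
    have e1 : ∀ i, (inner ℝ w (b i) : ℝ) = co i := fun i => real_inner_comm (b i) w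
    calc ∑ i, co i * co i = ∑ i, (inner ℝ w (b i) : ℝ) * (inner ℝ (b i) w : ℝ) := by
          apply Finset.sum_congr rfl; intro i _; rw [e1 i]
      _ = (inner ℝ w w : ℝ) := hp
      _ = ∑ x, π x * (u x * u x) := by
          rw [hinner]
          apply Finset.sum_congr rfl; intro x _
          rw [hwx, ← hs2 x]; ring
  -- quadratic form
  have hQ : ∑ x, π x * u x * -(∑ y, cs x y * (u y - u x)) = ∑ i, μ i * (co i * co i) := by
    have hTw : (inner ℝ w (T w) : ℝ) = ∑ x, π x * u x * -(∑ y, cs x y * (u y - u x)) := by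
      rw [hinner]
      apply Finset.sum_congr rfl; intro x _
      have : (T w) x = s x * -(∑ y, cs x y * (u y - u x)) := by
        rw [happ w x, show (fun y => w y) = fun y => s y * u y from funext hwx, key u x]
      rw [this, hwx, ← hs2 x]
      ring
    have hp := b.sum_inner_mul_inner w (T w)
    have e1 : ∀ i, (inner ℝ w (b i) : ℝ) = co i := fun i => real_inner_comm (b i) w
    have e2 : ∀ i, (inner ℝ (b i) (T w) : ℝ) = μ i * co i := by
      intro i
      rw [← hTsym (b i) w, hb i, real_inner_smul_left]
    rw [← hTw, ← hp]
    apply Finset.sum_congr rfl; intro i _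
    rw [e1 i, e2 i]
    ring
  -- pointwise bounds
  have hpt : ∀ i, αmin * (co i * co i) ≤ μ i * (co i * co i)
      ∧ μ i * (co i * co i) ≤ αmax * (co i * co i) := by
    intro i
    by_cases hi : μ i = 0
    · rw [hker_co i hi, hi]
      simp
    · obtain ⟨h1, h2⟩ := hbound_i i hi
      have hnn : 0 ≤ co i * co i := mul_self_nonneg _
      exact ⟨mul_le_mul_of_nonneg_right h1 hnn, mul_le_mul_of_nonneg_right h2 hnn⟩
  constructor
  · rw [hQ, ← hN, Finset.mul_sum]
    exact Finset.sum_le_sum fun i _ => (hpt i).1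
  · rw [hQ, ← hN, Finset.mul_sum]
    exact Finset.sum_le_sum fun i _ => (hpt i).2


/-- For the generator `L` of an irreducible finite-state Markov chain with
invariant measure `π` and symmetric part `L_S` (with respect to `L²(π)`, realized by the
symmetrized rates `c_s`), if `α_min` and `α_max` are the smallest and largest nonzero
eigenvalues of `−L_S`, then every nonzero (complex) eigenvalue `λ` of `−L` satisfies
`α_min ≤ Re(λ) ≤ α_max`. -/
theorem spectral_gap_bounds_broken_detailed_balance
    {Ω : Type*} [Fintype Ω] [DecidableEq Ω] [Nonempty Ω]
    (c : Ω → Ω → ℝ) (π : Ω → ℝ)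
    (hc : ∀ x y, x ≠ y → 0 ≤ c x y)
    (hπpos : ∀ x, 0 < π x) (hπsum : ∑ x, π x = 1)
    (hinv : ∀ f : Ω → ℝ, ∑ x, π x * (∑ y, c x y * (f y - f x)) = 0)
    (hirr : ∀ x y : Ω, x ≠ y → ∃ (k : ℕ) (p : Fin (k + 1) → Ω),
      p 0 = x ∧ p (Fin.last k) = y ∧ ∀ i : Fin k, 0 < c (p i.castSucc) (p i.succ))
    (cs : Ω → Ω → ℝ)
    (hcs : ∀ x y, cs x y = (c x y + π y * c y x / π x) / 2)
    (αmin αmax : ℝ)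
    -- α_min and α_max are nonzero eigenvalues of −L_S …
    (hαmin_eig : ∃ h : Ω → ℝ, h ≠ 0 ∧
      ∀ x, -(∑ y, cs x y * (h y - h x)) = αmin * h x)
    (hαmax_eig : ∃ h : Ω → ℝ, h ≠ 0 ∧
      ∀ x, -(∑ y, cs x y * (h y - h x)) = αmax * h x)
    (hαmin_ne : αmin ≠ 0) (hαmax_ne : αmax ≠ 0)
    -- … which bound all nonzero eigenvalues of −L_S:
    (hbounds : ∀ β : ℝ, β ≠ 0 →
      (∃ h : Ω → ℝ, h ≠ 0 ∧ ∀ x, -(∑ y, cs x y * (h y - h x)) = β * h x) →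
      αmin ≤ β ∧ β ≤ αmax) :
    ∀ lam : ℂ, lam ≠ 0 →
      (∃ v : Ω → ℂ, v ≠ 0 ∧
        ∀ x, -(∑ y, (c x y : ℂ) * (v y - v x)) = lam * v x) →
      αmin ≤ lam.re ∧ lam.re ≤ αmax := by
  intro lam hlam ⟨v, hv, heig⟩
  set f : Ω → ℝ := fun x => (v x).re with hf_def
  set g : Ω → ℝ := fun x => (v x).im with hg_def
  have hsymm : ∀ x y, π x * cs x y = π y * cs y x := by
    intro x y
    rw [hcs x y, hcs y x]
    field_simp [(hπpos x).ne', (hπpos y).ne']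
    ring
  have hrow := aux_row_eq c π hπpos hinv cs hcs
  have hker : ∀ h : Ω → ℝ, (∀ x, ∑ y, cs x y * (h y - h x) = 0) → ∀ x y, h x = h y :=
    fun h hh => aux_kernel_const c π hc hπpos hirr cs hcs hsymm h hh
  -- real/imaginary parts of the complex operator
  have reL : ∀ (u : Ω → ℂ) (x : Ω), (∑ y, (c x y:ℂ) * (u y - u x)).re
      = ∑ y, c x y * ((u y).re - (u x).re) := by
    intro u x
    rw [Complex.re_sum]
    apply Finset.sum_congr rfl; intro y _
    simp [Complex.mul_re]
  have imL : ∀ (u : Ω → ℂ) (x : Ω), (∑ y, (c x y:ℂ) * (u y - u x)).im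
      = ∑ y, c x y * ((u y).im - (u x).im) := by
    intro u x
    rw [Complex.im_sum]
    apply Finset.sum_congr rfl; intro y _
    simp [Complex.mul_im]
  -- orthogonality of v to constants
  have hsum0 : ∑ x, (π x : ℂ) * v x = 0 := by
    have hL : ∑ x, (π x:ℂ) * (∑ y, (c x y:ℂ) * (v y - v x)) = 0 := by
      apply Complex.ext
      · rw [Complex.re_sum]
        have : ∀ x, ((π x:ℂ) * (∑ y, (c x y:ℂ) * (v y - v x))).re
            = π x * (∑ y, c x y * (f y - f x)) := by
          intro x
          simp only [Complex.mul_re, Complex.ofReal_re, Complex.ofReal_im, zero_mul, sub_zero]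
          rw [reL v x]
        rw [Finset.sum_congr rfl (fun x _ => this x), hinv f]
        simp
      · rw [Complex.im_sum]
        have : ∀ x, ((π x:ℂ) * (∑ y, (c x y:ℂ) * (v y - v x))).im
            = π x * (∑ y, c x y * (g y - g x)) := by
          intro x
          simp only [Complex.mul_im, Complex.ofReal_re, Complex.ofReal_im, zero_mul, add_zero]
          rw [imL v x]
        rw [Finset.sum_congr rfl (fun x _ => this x), hinv g]
        simp
    have hzero : lam * ∑ x, (π x:ℂ) * v x = 0 := by
      have e1 : ∑ x, (π x:ℂ) * (lam * v x) = lam * ∑ x, (π x:ℂ) * v x := by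
        rw [Finset.mul_sum]
        exact Finset.sum_congr rfl fun x _ => by ring
      rw [← e1]
      have e2 : ∑ x, (π x:ℂ) * (lam * v x)
          = ∑ x, (π x:ℂ) * -(∑ y, (c x y:ℂ) * (v y - v x)) :=
        Finset.sum_congr rfl fun x _ => by rw [← heig x]
      rw [e2]
      have e3 : ∑ x, (π x:ℂ) * -(∑ y, (c x y:ℂ) * (v y - v x))
          = -∑ x, (π x:ℂ) * (∑ y, (c x y:ℂ) * (v y - v x)) := by
        rw [← Finset.sum_neg_distrib]
        exact Finset.sum_congr rfl fun x _ => by ring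
      rw [e3, hL, neg_zero]
    exact (mul_eq_zero.mp hzero).resolve_left hlam
  have hf0 : ∑ x, π x * f x = 0 := by
    have := congrArg Complex.re hsum0
    rw [Complex.re_sum] at this
    simpa [Complex.mul_re] using this
  have hg0 : ∑ x, π x * g x = 0 := by
    have := congrArg Complex.im hsum0
    rw [Complex.im_sum] at this
    simpa [Complex.mul_im] using this
  -- real part identity
  have hreterm : ∀ (x : Ω) (z : ℂ), ((π x:ℂ) * (starRingEnd ℂ) (v x) * z).re
      = π x * (f x * z.re + g x * z.im) := by
    intro x z
    simp [Complex.mul_re, Complex.mul_im]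
    ring
  have hsum_eq : ∑ x, (π x:ℂ) * (starRingEnd ℂ) (v x) * (lam * v x)
      = ∑ x, (π x:ℂ) * (starRingEnd ℂ) (v x) * -(∑ y, (c x y:ℂ) * (v y - v x)) :=
    Finset.sum_congr rfl fun x _ => by rw [heig x]
  have hre := congrArg Complex.re hsum_eq
  rw [Complex.re_sum, Complex.re_sum] at hre
  have hreLHS : ∀ x, ((π x:ℂ) * (starRingEnd ℂ) (v x) * (lam * v x)).re
      = lam.re * (π x * (f x * f x + g x * g x)) := by
    intro x
    rw [hreterm x (lam * v x)]
    simp only [Complex.mul_re, Complex.mul_im]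
    ring
  have hreRHS : ∀ x, ((π x:ℂ) * (starRingEnd ℂ) (v x) * -(∑ y, (c x y:ℂ) * (v y - v x))).re
      = π x * f x * -(∑ y, c x y * (f y - f x)) + π x * g x * -(∑ y, c x y * (g y - g x)) := by
    intro x
    rw [hreterm x _]
    rw [Complex.neg_re, Complex.neg_im, reL v x, imL v x]
    ring
  rw [Finset.sum_congr rfl (fun x _ => hreLHS x), Finset.sum_congr rfl (fun x _ => hreRHS x)]
    at hre
  -- N and its positivity
  set N : ℝ := ∑ x, π x * (f x * f x + g x * g x) with hN_def
  have hNpos : 0 < N := by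
    obtain ⟨x0, hx0⟩ := Function.ne_iff.mp hv
    have hterm : 0 < π x0 * (f x0 * f x0 + g x0 * g x0) := by
      have : f x0 ≠ 0 ∨ g x0 ≠ 0 := by
        by_contra hcon
        push_neg at hcon
        exact hx0 (Complex.ext hcon.1 hcon.2)
      have h2 : 0 < f x0 * f x0 + g x0 * g x0 := by
        rcases this with h' | h'
        · nlinarith [mul_self_nonneg (g x0), (mul_self_pos).mpr h']
        · nlinarith [mul_self_nonneg (f x0), (mul_self_pos).mpr h']
      exact mul_pos (hπpos x0) h2
    have hnn : ∀ x ∈ Finset.univ, 0 ≤ π x * (f x * f x + g x * g x) := by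
      intro x _
      have := (hπpos x).le
      nlinarith [mul_self_nonneg (f x), mul_self_nonneg (g x)]
    calc (0:ℝ) < π x0 * (f x0 * f x0 + g x0 * g x0) := hterm
      _ ≤ N := Finset.single_le_sum hnn (Finset.mem_univ x0)
  -- hre: lam.re * N = Q_c(f) + Q_c(g)
  have hlamN : lam.re * N
      = (∑ x, π x * f x * -(∑ y, c x y * (f y - f x)))
        + ∑ x, π x * g x * -(∑ y, c x y * (g y - g x)) := by
    rw [hN_def, Finset.mul_sum, ← Finset.sum_add_distrib] at *
    rw [← hre]
  -- switch to symmetrized rates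
  have hquadf := aux_quad_eq c π hπpos cs hcs hrow f
  have hquadg := aux_quad_eq c π hπpos cs hcs hrow g
  -- spectral bounds
  have hspecf := aux_spectral cs π hπpos hsymm hker αmin αmax hbounds f hf0
  have hspecg := aux_spectral cs π hπpos hsymm hker αmin αmax hbounds g hg0
  have hNsplit : N = (∑ x, π x * (f x * f x)) + ∑ x, π x * (g x * g x) := by
    rw [hN_def, ← Finset.sum_add_distrib]
    exact Finset.sum_congr rfl fun x _ => by ring
  have hlow : αmin * N ≤ lam.re * N := by
    rw [hlamN, hquadf, hquadg, hNsplit, mul_add]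
    exact add_le_add hspecf.1 hspecg.1
  have hhigh : lam.re * N ≤ αmax * N := by
    rw [hlamN, hquadf, hquadg, hNsplit, mul_add]
    exact add_le_add hspecf.2 hspecg.2
  exact ⟨le_of_mul_le_mul_right hlow hNpos, le_of_mul_le_mul_right hhigh hNpos⟩
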